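/- At I1* = N(1 − 1/R2) = N(β2−γ2)/β2, the inequality g(I1*) > f(I1*) holds if and only if (β2/γ2)·(β1+σ1)/(γ1+σ1) > β1/γ1, i.e., R21 > 1 where R21 = (R2/R1)·(β1+σ1)/(γ1+σ1). -/

import Mathlib

theorem g_gt_f_at_I1star_iff_R21_gt_one
    (N β1 β2 γ1 γ2 σ1 σ2 ε : ℝ)
    (hN : 0 < N) (hβ1 : 0 < β1) (hβ2 : 0 < β2) (hγ1 : 0 < γ1) (hγ2 : 0 < γ2)
    (hσ1 : 0 < σ1) (hσ2 : 0 < σ2) (hβ2γ2 : β2 > γ2) (hε0 : 0 ≤ ε) (hε1 : ε ≤ 1)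
    (φ ψ f g : ℝ → ℝ)
    (hφ : ∀ I1, φ I1 = (N * (β2 - γ2) - β2 * I1) * (β1 * (1 - ε) * I1 + N * σ2) /
          (β2 * (β1 * (1 - ε) * I1 + N * (γ2 + σ2))))
    (hψ : ∀ I1, ψ I1 = N * γ2 * (N * (β2 - γ2) - β2 * I1) /
          (β2 * (β1 * (1 - ε) * I1 + N * (γ2 + σ2))))
    (hf : ∀ I1, f I1 = N - I1 - φ I1 - ε * ψ I1 - N * γ1 / β1)
    (hg : ∀ I1, g I1 = N * γ1 * I1 / (N * σ1 + β2 * φ I1))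
    (I1star : ℝ) (hI1star : I1star = N * (β2 - γ2) / β2) :
    g I1star > f I1star ↔
      1 < ((β2 / γ2) / (β1 / γ1)) * ((β1 + σ1) / (γ1 + σ1)) := by
  have hzero : N * (β2 - γ2) - β2 * I1star = 0 := by
    rw [hI1star]; field_simp; ring
  have hφ0 : φ I1star = 0 := by rw [hφ, hzero]; ring
  have hψ0 : ψ I1star = 0 := by rw [hψ, hzero]; simp
  have hgv : g I1star = γ1 * (N * (β2 - γ2)) / (β2 * σ1) := by
    rw [hg, hφ0, hI1star]; field_simp; ring
  have hfv : f I1star = N * (γ2 * β1 - γ1 * β2) / (β1 * β2) := by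
    rw [hf, hφ0, hψ0, hI1star]; field_simp; ring
  rw [hgv, hfv, gt_iff_lt, div_lt_div_iff₀ (by positivity) (by positivity),
    show ((β2 / γ2) / (β1 / γ1)) * ((β1 + σ1) / (γ1 + σ1))
      = (β2 * γ1 * (β1 + σ1)) / (γ2 * β1 * (γ1 + σ1)) by field_simp,
    lt_div_iff₀ (by positivity)]
  constructor <;> intro h <;> nlinarith [mul_pos hN hβ2, h, mul_pos (mul_pos hN hβ2) hγ1]
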